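/- Let A(x) = (-φ(x); A(x)) be a 4D vector potential with φ : ℝ³ → ℝ and A : ℝ³ → ℝ³ (independent of the time coordinate t), and M = diag(-1,1,1,1). Consider the variational leapfrog momenta pⁿ = (M - (h/2) A'(xⁿ)ᵀ) u^{n+1/2} + (1/2)(A(xⁿ) + A(x^{n+1})) and p^{n+1} = (M + (h/2) A'(x^{n+1})ᵀ) u^{n+1/2} + (1/2)(A(xⁿ) + A(x^{n+1})), where u^{n+1/2} = (x^{n+1} - xⁿ)/h = (γ^{n+1/2}; u^{n+1/2}). Then the first components of pⁿ and p^{n+1} are both equal to -(γ^{n+1/2} + (1/2)(φ(xⁿ) + φ(x^{n+1}))). Consequently, the discrete energy H^{n+1/2} = γ^{n+1/2} + (1/2)(φ(xⁿ) + φ(x^{n+1})) is exactly conserved: H^{n+1/2} = H^{1/2} for all n. -/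

import Mathlib

open Matrix

noncomputable def spL : (Fin 4 → ℝ) →L[ℝ] (Fin 3 → ℝ) :=
  ContinuousLinearMap.pi fun i : Fin 3 => ContinuousLinearMap.proj (i.succ : Fin 4)

lemma fderiv_time_indep (φ : (Fin 3 → ℝ) → ℝ) (hφ : Differentiable ℝ φ)
    (A3 : (Fin 3 → ℝ) → (Fin 3 → ℝ)) (hA3 : Differentiable ℝ A3)
    (A : (Fin 4 → ℝ) → (Fin 4 → ℝ))
    (hA : ∀ y, A y = Fin.cons (-φ (fun i => y i.succ)) (A3 (fun i => y i.succ)))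
    (y : Fin 4 → ℝ) (i : Fin 4) :
    fderiv ℝ A y (Pi.single 0 1) i = 0 := by
  set F : (Fin 3 → ℝ) → (Fin 4 → ℝ) := fun z => Fin.cons (-φ z) (A3 z) with hF
  have hFd : Differentiable ℝ F := by
    rw [differentiable_pi]
    intro j
    refine Fin.cases ?_ ?_ j
    · simpa [hF] using hφ.neg
    · intro k
      simpa [hF] using (differentiable_pi.mp hA3 k)
  have hAeq : A = F ∘ spL := by
    funext y
    simp [hA, hF, spL, Function.comp]
  have hder : fderiv ℝ A y = (fderiv ℝ F (spL y)).comp (fderiv ℝ (spL : (Fin 4 → ℝ) → (Fin 3 → ℝ)) y) := by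
    rw [hAeq]
    exact fderiv_comp (x := y) (hFd (spL y)) spL.differentiableAt
  have h0 : spL (Pi.single (0 : Fin 4) (1 : ℝ)) = 0 := by
    funext j
    simp [spL, Pi.single_eq_of_ne (Fin.succ_ne_zero j)]
  rw [hder]
  simp [ContinuousLinearMap.fderiv, h0]

theorem variational_leapfrog_energy
    (M : Matrix (Fin 4) (Fin 4) ℝ) (hM : M = Matrix.diagonal ![-1, 1, 1, 1])
    (sp : (Fin 4 → ℝ) → (Fin 3 → ℝ)) (hsp : ∀ y i, sp y i = y i.succ)
    (φ : (Fin 3 → ℝ) → ℝ) (hφ : Differentiable ℝ φ)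
    (A3 : (Fin 3 → ℝ) → (Fin 3 → ℝ)) (hA3 : Differentiable ℝ A3)
    (A : (Fin 4 → ℝ) → (Fin 4 → ℝ))
    (hA : ∀ y, A y = Fin.cons (-φ (sp y)) (A3 (sp y)))
    (jac : (Fin 4 → ℝ) → Matrix (Fin 4) (Fin 4) ℝ)
    (hjac : ∀ y i j, jac y i j = fderiv ℝ A y (Pi.single j 1) i)
    (h : ℝ) (hh : 0 < h)
    (x : ℕ → Fin 4 → ℝ)
    (uhalf : ℕ → Fin 4 → ℝ) (hu : ∀ n, uhalf n = h⁻¹ • (x (n + 1) - x n))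
    (γhalf : ℕ → ℝ) (hγ : ∀ n, γhalf n = uhalf n 0)
    (q r : ℕ → Fin 4 → ℝ)
    (hq : ∀ n, q n = (M - (h / 2) • (jac (x n))ᵀ) *ᵥ uhalf n
      + (1 / 2 : ℝ) • (A (x n) + A (x (n + 1))))
    (hr : ∀ n, r n = (M + (h / 2) • (jac (x (n + 1)))ᵀ) *ᵥ uhalf n
      + (1 / 2 : ℝ) • (A (x n) + A (x (n + 1))))
    (hmethod : ∀ n, r n = q (n + 1))
    (H : ℕ → ℝ)
    (hH : ∀ n, H n = γhalf n + (1 / 2) * (φ (sp (x n)) + φ (sp (x (n + 1))))) :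
    (∀ n, q n 0 = -H n ∧ r n 0 = -H n) ∧ (∀ n, H n = H 0) := by
  have hsp' : sp = fun y i => y i.succ := by
    funext y i; exact hsp y i
  have hA' : ∀ y, A y = Fin.cons (-φ (fun i => y i.succ)) (A3 (fun i => y i.succ)) := by
    intro y; rw [hA y, hsp']
  have hjac0 : ∀ y i, jac y i 0 = 0 := by
    intro y i
    rw [hjac]
    exact fderiv_time_indep φ hφ A3 hA3 A hA' y i
  have hA0 : ∀ y, A y 0 = -φ (sp y) := by
    intro y; rw [hA y]; simp
  have hq0 : ∀ n, q n 0 = -H n := by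
    intro n
    rw [hq n]
    simp only [Pi.add_apply, Pi.smul_apply, Pi.sub_apply, smul_eq_mul,
      Matrix.mulVec, dotProduct, Fin.sum_univ_four,
      Matrix.sub_apply, Matrix.smul_apply, Matrix.transpose_apply, hjac0, hM,
      hA0, hH n, hγ n]
    simp [Matrix.diagonal]
    ring
  have hr0 : ∀ n, r n 0 = -H n := by
    intro n
    rw [hr n]
    simp only [Pi.add_apply, Pi.smul_apply, smul_eq_mul,
      Matrix.mulVec, dotProduct, Fin.sum_univ_four,
      Matrix.add_apply, Matrix.smul_apply, Matrix.transpose_apply, hjac0, hM,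
      hA0, hH n, hγ n]
    simp [Matrix.diagonal]
    ring
  refine ⟨fun n => ⟨hq0 n, hr0 n⟩, ?_⟩
  intro n
  induction n with
  | zero => rfl
  | succ k ih =>
    have : -H (k + 1) = -H k := by
      rw [← hq0 (k + 1), ← hmethod k, hr0 k]
    linarith [ih]
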